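/- arXiv:1510.07131 — 3 statements merged into one kernel-verified Lean document; each statement's English description precedes it below -/
import Mathlib

section
/- A preorder P is Kan injective (left Kan injective) with respect to all full order-embeddings into preorders if and only if P is a complete lattice (up to equivalence of preorders); in particular, a poset is injective with respect to poset embeddings, with left Kan extensions existing along each embedding, if and only if it is a complete lattice. -/
/-- A preorder `P` is left Kan injective with respect to all full monotone
maps (full order-embeddings) of preorders — i.e. along every full monotone
`j : X → Y` every monotone `f : X → P` has a left Kan extension `g` with
`g ∘ j ≃ f` pointwise — if and only if `P` is a complete lattice up to
equivalence of preorders (every subset has a supremum and an infimum). -/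
theorem stmt12 (P : Type) [Preorder P] :
    (∀ (X Y : Type) [Preorder X] [Preorder Y] (j : X → Y),
        Monotone j → (∀ x x' : X, j x ≤ j x' → x ≤ x') →
        ∀ f : X → P, Monotone f →
          ∃ g : Y → P, Monotone g ∧
            (∀ x, g (j x) ≤ f x ∧ f x ≤ g (j x)) ∧
            (∀ h : Y → P, Monotone h → (∀ x, f x ≤ h (j x)) → ∀ y, g y ≤ h y)) ↔
      (∀ D : Set P, (∃ s, IsLUB D s) ∧ (∃ i, IsGLB D i)) := by
  constructor
  · intro H
    -- First: every set has a LUB.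
    have lub : ∀ D : Set P, ∃ s, IsLUB D s := by
      intro D
      have full : ∀ x x' : ↥D, (x : WithTop ↥D) ≤ (x' : WithTop ↥D) → x ≤ x' := by
        intro x x' h
        exact_mod_cast h
      obtain ⟨g, gmono, gext, gleast⟩ :=
        H (↥D) (WithTop ↥D) (fun x => (x : WithTop ↥D))
          (fun a b hab => WithTop.coe_le_coe.mpr hab) full
          (fun x => (x : P)) (fun a b hab => hab)
      refine ⟨g ⊤, ?_, ?_⟩
      · intro d hd
        calc d = ((⟨d, hd⟩ : ↥D) : P) := rfl
          _ ≤ g ((⟨d, hd⟩ : ↥D) : WithTop ↥D) := (gext ⟨d, hd⟩).2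
          _ ≤ g ⊤ := gmono le_top
      · intro b hb
        exact gleast (fun _ => b) monotone_const (fun x => hb x.2) ⊤
    intro D
    refine ⟨lub D, ?_⟩
    obtain ⟨s, hs⟩ := lub (lowerBounds D)
    refine ⟨s, ?_, ?_⟩
    · intro d hd
      exact hs.2 (fun t ht => ht hd)
    · intro t ht
      exact hs.1 ht
  · intro hC X Y _ _ j jmono jfull f fmono
    choose sup hsup using fun D : Set P => (hC D).1
    refine ⟨fun y => sup {p | ∃ x, f x = p ∧ j x ≤ y}, ?_, ?_, ?_⟩
    · intro y y' hyy'
      refine (hsup _).2 ?_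
      rintro p ⟨x, rfl, hx⟩
      exact (hsup _).1 ⟨x, rfl, hx.trans hyy'⟩
    · intro x
      constructor
      · refine (hsup _).2 ?_
        rintro p ⟨x', rfl, hx'⟩
        exact fmono (jfull _ _ hx')
      · exact (hsup _).1 ⟨x, rfl, le_refl _⟩
    · intro h hmono hf y
      refine (hsup _).2 ?_
      rintro p ⟨x, rfl, hx⟩
      exact (hf x).trans (hmono hx)
end

section
/- A T0 topological space X that is injective with respect to all topological embeddings (every continuous map into X from a subspace extends continuously to the ambient space) is, under its specialisation order, a complete lattice in which every element is a directed supremum of elements way below it (i.e., a continuous lattice). [Scott's theorem, one direction: injective T0 spaces are continuous lattices under specialisation order.] -/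
/-- The specialisation order of a topological space: `x ⊑ y` iff
`x ∈ closure {y}`. -/
def specLE (X : Type*) [TopologicalSpace X] (x y : X) : Prop :=
  x ∈ closure {y}

/-- A set is directed with respect to a relation `r`. -/
def rDirected {X : Type*} (r : X → X → Prop) (D : Set X) : Prop :=
  D.Nonempty ∧ ∀ a ∈ D, ∀ b ∈ D, ∃ c ∈ D, r a c ∧ r b c

/-- `s` is a least upper bound of `D` with respect to a relation `r`. -/
def rIsLUB {X : Type*} (r : X → X → Prop) (D : Set X) (s : X) : Prop :=
  (∀ d ∈ D, r d s) ∧ ∀ b, (∀ d ∈ D, r d b) → r s b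

/-- `x` is way below `y` with respect to a relation `r`. -/
def rWayBelow {X : Type*} (r : X → X → Prop) (x y : X) : Prop :=
  ∀ D, rDirected r D → ∀ s, rIsLUB r D s → r y s → ∃ d ∈ D, r x d

section auxLemmas

open Topology TopologicalSpace

variable {X : Type} [TopologicalSpace X]

lemma specLE_iff_forall_open {x y : X} :
    specLE X x y ↔ ∀ U : Set X, IsOpen U → x ∈ U → y ∈ U := by
  constructor
  · intro h U hU hx
    rcases mem_closure_iff.1 h U hU hx with ⟨z, hzU, hzy⟩
    rwa [Set.mem_singleton_iff.1 hzy] at hzU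
  · intro h
    exact mem_closure_iff.2 fun o ho hxo => ⟨y, h o ho hxo, rfl⟩

lemma specLE_refl' (x : X) : specLE X x x := subset_closure rfl

lemma specLE_trans' {x y z : X} (h1 : specLE X x y) (h2 : specLE X y z) :
    specLE X x z := by
  rw [specLE_iff_forall_open] at *
  exact fun U hU hx => h2 U hU (h1 U hU hx)

lemma prop_specializes {p q : Prop} (h : p → q) : (q : Prop) ⤳ p := by
  by_cases hp : p
  · rw [eq_true hp, eq_true (h hp)]
  · rw [eq_false hp, specializes_iff_nhds, nhds_false]
    exact le_top

end auxLemmas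

open Topology TopologicalSpace in
/-- Scott's theorem, one direction: a T₀ space that is injective with respect
to all topological embeddings is, under its specialisation order, a complete
lattice in which every element is a directed supremum of the elements way
below it (i.e. a continuous lattice). -/
theorem stmt13 (X : Type) [TopologicalSpace X] [T0Space X]
    (hinj : ∀ (A B : Type) (_ : TopologicalSpace A) (_ : TopologicalSpace B)
        (j : A → B), Topology.IsEmbedding j →
        ∀ f : A → X, Continuous f → ∃ g : B → X, Continuous g ∧ ∀ a, g (j a) = f a) :
    (∀ D : Set X, ∃ s, rIsLUB (specLE X) D s) ∧
      (∀ x : X, rDirected (specLE X) {y | rWayBelow (specLE X) y x} ∧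
        rIsLUB (specLE X) {y | rWayBelow (specLE X) y x} x) := by
  classical
  obtain ⟨g, hgc, hg⟩ := hinj X (Opens X → Prop) _ _ (productOfMemOpens X)
    (productOfMemOpens_isEmbedding X) id continuous_id

  -- the canonical embedding as a bare function
  let E : X → Opens X → Prop := fun x i => x ∈ i
  have hgE : ∀ a : X, g (E a) = a := fun a => hg a
  -- open sets in the Sierpinski power are upward closed
  have hup : ∀ {V : Set (Opens X → Prop)} {A B : Opens X → Prop}, IsOpen V → A ∈ V →
      (∀ i, A i → B i) → B ∈ V := by
    intro V A B hV hA h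
    exact (specializes_pi.2 fun i => prop_specializes (h i)).mem_open hV hA
  -- monotonicity of the retraction g
  have hmono : ∀ {A B : Opens X → Prop}, (∀ i, A i → B i) → specLE X (g A) (g B) := by
    intro A B h
    rw [specLE_iff_forall_open]
    intro U hU hgA
    exact hup (hU.preimage hgc) hgA h
  -- finite character of open sets in the Sierpinski power
  have hfin : ∀ {V : Set (Opens X → Prop)} {A : Opens X → Prop}, IsOpen V → A ∈ V →
      ∃ F : Finset (Opens X), ∀ B : Opens X → Prop, (∀ i ∈ F, A i → B i) → B ∈ V := by
    intro V A hV hA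
    obtain ⟨I, u, hu, hsub⟩ := isOpen_pi_iff.1 hV A hA
    exact ⟨I, fun B hB => hsub fun i hi =>
      (prop_specializes (hB i hi)).mem_open (hu i hi).1 (hu i hi).2⟩
  -- suprema of arbitrary subsets
  have hsup : ∀ D : Set X, rIsLUB (specLE X) D (g fun i => ∃ d ∈ D, d ∈ i) := by
    intro D
    constructor
    · intro d hd
      have h : specLE X (g (E d)) (g fun i => ∃ d ∈ D, d ∈ i) :=
        hmono fun i hi => ⟨d, hd, hi⟩
      rwa [hgE d] at h
    · intro b hb
      have h : specLE X (g fun i => ∃ d ∈ D, d ∈ i) (g (E b)) := by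
        refine hmono fun i hi => ?_
        obtain ⟨d, hd, hdi⟩ := hi
        exact specLE_iff_forall_open.1 (hb d hd) (i : Set X) i.isOpen hdi
      rwa [hgE b] at h
  -- directed sets have upper bounds over finite collections of opens
  have hdirbound : ∀ D : Set X, rDirected (specLE X) D → ∀ F : Finset (Opens X),
      (∀ i ∈ F, ∃ d ∈ D, d ∈ i) → ∃ d ∈ D, ∀ i ∈ F, d ∈ i := by
    intro D hD F
    induction F using Finset.induction_on with
    | empty =>
      intro _
      obtain ⟨d, hd⟩ := hD.1
      exact ⟨d, hd, by simp⟩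
    | @insert i F hiF ih =>
      intro h
      obtain ⟨d', hd', hd'F⟩ := ih fun j hj => h j (Finset.mem_insert_of_mem hj)
      obtain ⟨di, hdi, hdii⟩ := h i (Finset.mem_insert_self i F)
      obtain ⟨c, hc, hc1, hc2⟩ := hD.2 di hdi d' hd'
      refine ⟨c, hc, fun j hj => ?_⟩
      rcases Finset.mem_insert.1 hj with rfl | hj
      · exact specLE_iff_forall_open.1 hc1 (j : Set X) j.isOpen hdii
      · exact specLE_iff_forall_open.1 hc2 (j : Set X) j.isOpen (hd'F j hj)
  -- every open set is Scott open: it is inaccessible by directed suprema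
  have hscott : ∀ D : Set X, rDirected (specLE X) D → ∀ s, rIsLUB (specLE X) D s →
      ∀ V : Set X, IsOpen V → s ∈ V → ∃ d ∈ D, d ∈ V := by
    intro D hD s hs V hV hsV
    have hs' := hsup D
    have h1 : specLE X s (g fun i => ∃ d ∈ D, d ∈ i) := hs.2 _ hs'.1
    have hgV : (fun i => ∃ d ∈ D, d ∈ i) ∈ g ⁻¹' V :=
      specLE_iff_forall_open.1 h1 V hV hsV
    obtain ⟨F, hF⟩ := hfin (hV.preimage hgc) hgV
    obtain ⟨d, hd, hdF⟩ := hdirbound D hD (F.filter fun i => ∃ d ∈ D, d ∈ i)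
      (fun i hi => (Finset.mem_filter.1 hi).2)
    refine ⟨d, hd, ?_⟩
    have h2 : E d ∈ g ⁻¹' V :=
      hF (E d) fun i hi hex => hdF i (Finset.mem_filter.2 ⟨hi, hex⟩)
    rwa [Set.mem_preimage, hgE d] at h2
  -- finite approximations are way below
  have hwb : ∀ (x : X) (F : Finset (Opens X)), (∀ i ∈ F, x ∈ i) →
      rWayBelow (specLE X) (g fun i => i ∈ F) x := by
    intro x F hF D hD s hs hxs
    have hV : IsOpen (⋂ i ∈ F, (i : Set X)) :=
      isOpen_biInter_finset fun i _ => i.isOpen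
    have hxV : x ∈ ⋂ i ∈ F, (i : Set X) := Set.mem_iInter₂.2 fun i hi => hF i hi
    have hsV : s ∈ ⋂ i ∈ F, (i : Set X) := specLE_iff_forall_open.1 hxs _ hV hxV
    obtain ⟨d, hd, hdV⟩ := hscott D hD s hs _ hV hsV
    refine ⟨d, hd, ?_⟩
    have h : specLE X (g fun i => i ∈ F) (g (E d)) :=
      hmono fun i hi => Set.mem_iInter₂.1 hdV i hi
    rwa [hgE d] at h
  -- way below implies below
  have hwb_le : ∀ {y x : X}, rWayBelow (specLE X) y x → specLE X y x := by
    intro y x h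
    have hdir : rDirected (specLE X) {x} := by
      refine ⟨⟨x, rfl⟩, fun a ha b hb => ⟨x, rfl, ?_, ?_⟩⟩
      · rw [Set.mem_singleton_iff.1 ha]; exact specLE_refl' x
      · rw [Set.mem_singleton_iff.1 hb]; exact specLE_refl' x
    have hlub : rIsLUB (specLE X) {x} x := by
      refine ⟨fun d hd => ?_, fun b hb => hb x rfl⟩
      rw [Set.mem_singleton_iff.1 hd]; exact specLE_refl' x
    obtain ⟨d, hd, hyd⟩ := h {x} hdir x hlub (specLE_refl' x)
    rwa [Set.mem_singleton_iff.1 hd] at hyd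
  -- x is a least upper bound of its finite approximations
  have hleast : ∀ (x b : X),
      (∀ F : Finset (Opens X), (∀ i ∈ F, x ∈ i) → specLE X (g fun i => i ∈ F) b) →
      specLE X x b := by
    intro x b hb
    rw [specLE_iff_forall_open]
    intro U hU hxU
    have hx : E x ∈ g ⁻¹' U := by rw [Set.mem_preimage, hgE x]; exact hxU
    obtain ⟨G, hG⟩ := hfin (hU.preimage hgc) hx
    have h1 : (fun i => i ∈ G.filter fun i => x ∈ i) ∈ g ⁻¹' U :=
      hG _ fun i hi hxi => Finset.mem_filter.2 ⟨hi, hxi⟩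
    have h2 : specLE X (g fun i => i ∈ G.filter fun i => x ∈ i) b :=
      hb _ fun i hi => (Finset.mem_filter.1 hi).2
    exact specLE_iff_forall_open.1 h2 U hU h1
  refine ⟨fun D => ⟨_, hsup D⟩, fun x => ?_⟩
  -- the directed set of finite approximations of x, with lub x
  set D₀ : Set X :=
    {y | ∃ F : Finset (Opens X), (∀ i ∈ F, x ∈ i) ∧ y = g fun i => i ∈ F} with hD₀
  have hD₀dir : rDirected (specLE X) D₀ := by
    constructor
    · exact ⟨g fun i => i ∈ (∅ : Finset (Opens X)), ∅, by simp, rfl⟩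
    · rintro a ⟨F, hF, rfl⟩ b ⟨F', hF', rfl⟩
      refine ⟨g fun i => i ∈ F ∪ F', ⟨F ∪ F', ?_, rfl⟩, ?_, ?_⟩
      · intro i hi
        rcases Finset.mem_union.1 hi with hi | hi
        · exact hF i hi
        · exact hF' i hi
      · exact hmono fun i hi => Finset.mem_union_left _ hi
      · exact hmono fun i hi => Finset.mem_union_right _ hi
  have hD₀lub : rIsLUB (specLE X) D₀ x := by
    constructor
    · rintro d ⟨F, hF, rfl⟩
      have h : specLE X (g fun i => i ∈ F) (g (E x)) :=
        hmono fun i hi => hF i hi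
      rwa [hgE x] at h
    · intro b hb
      exact hleast x b fun F hF => hb _ ⟨F, hF, rfl⟩
  constructor
  · constructor
    · exact ⟨g fun i => i ∈ (∅ : Finset (Opens X)), hwb x ∅ (by simp)⟩
    · intro a ha b hb
      obtain ⟨da, ⟨Fa, hFa, rfl⟩, hada⟩ := ha D₀ hD₀dir x hD₀lub (specLE_refl' x)
      obtain ⟨db, ⟨Fb, hFb, rfl⟩, hbdb⟩ := hb D₀ hD₀dir x hD₀lub (specLE_refl' x)
      refine ⟨g fun i => i ∈ Fa ∪ Fb, hwb x (Fa ∪ Fb) ?_, ?_, ?_⟩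
      · intro i hi
        rcases Finset.mem_union.1 hi with hi | hi
        · exact hFa i hi
        · exact hFb i hi
      · exact specLE_trans' hada (hmono fun i hi => Finset.mem_union_left _ hi)
      · exact specLE_trans' hbdb (hmono fun i hi => Finset.mem_union_right _ hi)
  · constructor
    · exact fun y hy => hwb_le hy
    · intro b hb
      exact hleast x b fun F hF => hb _ (hwb x F hF)
end

section
/- Let β be a limit ordinal with the topology on {γ : γ < β} in which U is open iff U is upward closed and for every bounded subset D ⊆ β with sup D ∈ U one has U ∩ D ≠ ∅. Then for each μ < β the inclusion succ(μ) ↪ β is a topological embedding when succ(μ) carries its Scott topology. -/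
/-- Scott-openness for a subset of a complete linear order: `U` is upward
closed and meets every nonempty directed set whose supremum lies in `U`. -/
def ScottOpen {L : Type*} [Preorder L] (U : Set L) : Prop :=
  IsUpperSet U ∧
    ∀ D : Set L, D.Nonempty → DirectedOn (· ≤ ·) D →
      ∀ s, IsLUB D s → s ∈ U → (D ∩ U).Nonempty

/-- Openness for the colimit topology on a limit ordinal `β`: `V` is upward
closed and meets every nonempty bounded set whose supremum lies in `V`. -/
def LimitOpen {L : Type*} [Preorder L] (V : Set L) : Prop :=
  IsUpperSet V ∧
    ∀ D : Set L, D.Nonempty → BddAbove D →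
      ∀ s, IsLUB D s → s ∈ V → (D ∩ V).Nonempty

/-- For a limit ordinal `β` with the colimit topology, each inclusion
`succ μ ↪ β` (for `μ < β`) is a topological embedding when `succ μ` carries
its Scott topology: it is injective, and the Scott-open subsets of `succ μ`
are exactly the preimages of open subsets of `β`. -/
theorem stmt18 (β : Ordinal) (hβ : Order.IsSuccLimit β) (μ : Ordinal) (hμ : μ < β) :
    Function.Injective
      (fun γ : {γ : Ordinal // γ ≤ μ} =>
        (⟨γ.1, lt_of_le_of_lt γ.2 hμ⟩ : {γ : Ordinal // γ < β})) ∧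
    ∀ U : Set {γ : Ordinal // γ ≤ μ},
      ScottOpen U ↔
        ∃ V : Set {γ : Ordinal // γ < β}, LimitOpen V ∧
          U = (fun γ : {γ : Ordinal // γ ≤ μ} =>
                (⟨γ.1, lt_of_le_of_lt γ.2 hμ⟩ : {γ : Ordinal // γ < β})) ⁻¹' V := by
  set f : {γ : Ordinal // γ ≤ μ} → {γ : Ordinal // γ < β} :=
    fun γ => ⟨γ.1, lt_of_le_of_lt γ.2 hμ⟩ with hf
  constructor
  · intro a b hab
    have h1 : (f a).1 = (f b).1 := congrArg Subtype.val hab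
    exact Subtype.ext h1
  · intro U
    constructor
    · rintro ⟨hU, hScott⟩
      refine ⟨{x | ∃ u ∈ U, u.1 ≤ x.1}, ⟨?_, ?_⟩, ?_⟩
      · rintro a b hab ⟨u, hu, hua⟩
        exact ⟨u, hu, hua.trans hab⟩
      · rintro D ⟨d0, hd0⟩ hbdd s hs ⟨u, hu, hus⟩
        rcases lt_or_eq_of_le hus with hlt | heq
        · -- u.1 < s.1 : some element of D exceeds u
          by_contra hcon
          have hub : s ≤ ⟨u.1, lt_of_le_of_lt u.2 hμ⟩ := by
            apply hs.2
            intro d hd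
            by_contra hdu
            push_neg at hdu
            exact hcon ⟨d, hd, u, hu, le_of_lt hdu⟩
          exact absurd hub (not_le.2 hlt)
        · -- u.1 = s.1 : use Scott openness of U
          have hle : ∀ d ∈ D, d.1 ≤ μ := fun d hd =>
            le_trans (le_trans (hs.1 hd) (le_of_eq heq.symm)) u.2
          set E : Set {γ : Ordinal // γ ≤ μ} := {γ | f γ ∈ D} with hE
          have hEne : E.Nonempty := ⟨⟨d0.1, hle d0 hd0⟩, hd0⟩
          have hEdir : DirectedOn (· ≤ ·) E := fun a ha b hb =>
            (le_total a b).elim (fun h => ⟨b, hb, h, le_rfl⟩)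
              (fun h => ⟨a, ha, le_rfl, h⟩)
          have hlub : IsLUB E u := by
            constructor
            · intro e he
              have : (e.1 : Ordinal) ≤ s.1 := hs.1 he
              exact Subtype.coe_le_coe.1 (by rw [← heq] at this; exact this)
            · intro b hb
              have : s ≤ f b := by
                apply hs.2
                intro d hd
                exact hb (show (⟨d.1, hle d hd⟩ : {γ // γ ≤ μ}) ∈ E from hd)
              have : s.1 ≤ b.1 := this
              exact Subtype.coe_le_coe.1 (by rw [heq]; exact this)
          obtain ⟨e, heE, heU⟩ := hScott E hEne hEdir u hlub hu
          exact ⟨f e, heE, e, heU, le_rfl⟩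
      · ext x
        constructor
        · intro hx
          exact ⟨x, hx, le_rfl⟩
        · rintro ⟨u, hu, hux⟩
          exact hU (Subtype.coe_le_coe.1 hux) hu
    · rintro ⟨V, ⟨hV, hLim⟩, rfl⟩
      constructor
      · intro a b hab ha
        exact hV (show f a ≤ f b from hab) ha
      · rintro D ⟨d0, hd0⟩ hdir s hs hsV
        have hbdd : BddAbove (f '' D) := ⟨⟨μ, hμ⟩, by rintro x ⟨d, hd, rfl⟩; exact d.2⟩
        have hlub : IsLUB (f '' D) (f s) := by
          constructor
          · rintro x ⟨d, hd, rfl⟩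
            exact hs.1 hd
          · intro b hb
            rcases le_or_gt b.1 μ with hbμ | hbμ
            · have : s ≤ ⟨b.1, hbμ⟩ := hs.2 fun d hd => hb ⟨d, hd, rfl⟩
              exact this
            · exact Subtype.coe_le_coe.1 (le_trans s.2 hbμ.le)
        obtain ⟨x, hxD, hxV⟩ := hLim (f '' D) ⟨f d0, d0, hd0, rfl⟩ hbdd (f s) hlub hsV
        obtain ⟨d, hd, rfl⟩ := hxD
        exact ⟨d, hd, hxV⟩
end
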